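/- Let p ≥ 1 be an integer, let N be a p-rooted almost-binary phylogenetic network on X, and let {Z_1, ..., Z_d} be the maximal zig-zag trail decomposition of N. Then |A_N| = ∏_{i=1}^d |S_A(Z_i)|, |B_N| = ∏_{i=1}^d |S_B(Z_i)|, and |C_N| = ∏_{i=1}^d |S_C(Z_i)|, where A_N, B_N, C_N are the families of all, minimal, and minimum support networks of N and S_A(Z_i), S_B(Z_i), S_C(Z_i) are the families of A-, B-, and C-admissible subsets of E(Z_i), respectively. -/

import Mathlib

open Finset

variable {V : Type} [DecidableEq V] [Fintype V]

/-- The vertex set of the digraph given by the edge set `E`. -/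
def verts (E : Finset (V × V)) : Finset V :=
  E.image Prod.fst ∪ E.image Prod.snd

/-- In-degree of `v` in the digraph with edge set `E`. -/
def indeg (E : Finset (V × V)) (v : V) : ℕ :=
  (E.filter fun e => e.2 = v).card

/-- Out-degree of `v` in the digraph with edge set `E`. -/
def outdeg (E : Finset (V × V)) (v : V) : ℕ :=
  (E.filter fun e => e.1 = v).card

/-- `E` is (the edge set of) a `p`-rooted almost-binary phylogenetic network on `X`:
a finite simple DAG with exactly `p` in-degree-0 vertices, each of out-degree 1 or 2 (the roots),
whose set of in-degree-1, out-degree-0 vertices is `X` (the leaves), and all of whose other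
vertices have in-degree and out-degree in `{1, 2}`. -/
structure IsPhyloNet (E : Finset (V × V)) (p : ℕ) (X : Finset V) : Prop where
  acyclic : ∀ v : V, ¬ Relation.TransGen (fun a b => (a, b) ∈ E) v v
  roots_card : ((verts E).filter fun v => indeg E v = 0).card = p
  root_outdeg : ∀ v ∈ verts E, indeg E v = 0 → outdeg E v = 1 ∨ outdeg E v = 2
  leaves_eq : (verts E).filter (fun v => indeg E v = 1 ∧ outdeg E v = 0) = X
  internal_deg : ∀ v ∈ verts E, indeg E v ≠ 0 → v ∉ X →
    (indeg E v = 1 ∨ indeg E v = 2) ∧ (outdeg E v = 1 ∨ outdeg E v = 2)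

/-- Two directed edges share a tail or share a head. -/
def Shares (e f : V × V) : Prop := e.1 = f.1 ∨ e.2 = f.2

/-- `S` is (the edge set of) a zig-zag trail of the digraph `E`: a subgraph with `m ≥ 1`
edges which can be ordered so that consecutive edges share a head or share a tail. -/
def IsZigzagTrail (E S : Finset (V × V)) : Prop :=
  S ⊆ E ∧ ∃ l : List (V × V), l ≠ [] ∧ l.Nodup ∧ l.toFinset = S ∧ l.Chain' Shares

/-- A maximal zig-zag trail: one that is not a proper subgraph of another zig-zag trail. -/
def IsMaximalZigzagTrail (E S : Finset (V × V)) : Prop :=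
  IsZigzagTrail E S ∧ ∀ S', IsZigzagTrail E S' → ¬ S ⊂ S'

/-- The `i`-th edge (0-indexed) of a zig-zag sequence on vertices `f 0, f 1, ...`;
when `down = true` the first edge descends (`f 0 > f 1`), and directions alternate. -/
def zigEdge (f : ℕ → V) (down : Bool) (i : ℕ) : V × V :=
  if decide (i % 2 = 0) = down then (f i, f (i + 1)) else (f (i + 1), f i)

/-- `S` consists of the `m` distinct edges of the zig-zag sequence on `f 0, ..., f m`. -/
def IsZigzagShape (S : Finset (V × V)) (m : ℕ) (f : ℕ → V) (down : Bool) : Prop :=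
  S = (Finset.range m).image (zigEdge f down) ∧
  ∀ i < m, ∀ j < m, zigEdge f down i = zigEdge f down j → i = j

/-- A crown: an even number `m` of edges written cyclically as `v₀ > v₁ < ⋯ < v_m = v₀`. -/
def IsCrown (S : Finset (V × V)) : Prop :=
  ∃ m f, 1 ≤ m ∧ m % 2 = 0 ∧ f m = f 0 ∧ IsZigzagShape S m f true

/-- An M-fence: a non-crown with an even number `m` of edges,
of the form `v₀ < v₁ > ⋯ > v_m ≠ v₀`. -/
def IsMFence (S : Finset (V × V)) : Prop :=
  ¬ IsCrown S ∧ ∃ m f, 1 ≤ m ∧ m % 2 = 0 ∧ f m ≠ f 0 ∧ IsZigzagShape S m f false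

/-- A W-fence: a non-crown with an even number `m` of edges,
of the form `v₀ > v₁ < ⋯ < v_m ≠ v₀`. -/
def IsWFence (S : Finset (V × V)) : Prop :=
  ¬ IsCrown S ∧ ∃ m f, 1 ≤ m ∧ m % 2 = 0 ∧ f m ≠ f 0 ∧ IsZigzagShape S m f true

/-- An N-fence: a non-crown with an odd number `m` of edges,
of the form `v₀ > v₁ < ⋯ > v_m`. -/
def IsNFence (S : Finset (V × V)) : Prop :=
  ¬ IsCrown S ∧ ∃ m f, m % 2 = 1 ∧ IsZigzagShape S m f true

/-- A support network of `N = (V, E)`: a spanning subgraph that is itself a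
`p`-rooted almost-binary phylogenetic network on `X` (identified with its edge set). -/
def IsSupportNet (E S : Finset (V × V)) (p : ℕ) (X : Finset V) : Prop :=
  S ⊆ E ∧ verts S = verts E ∧ IsPhyloNet S p X

/-- A minimal support network: no support network is a proper subgraph of it. -/
def IsMinimalSupportNet (E S : Finset (V × V)) (p : ℕ) (X : Finset V) : Prop :=
  IsSupportNet E S p X ∧ ∀ S', IsSupportNet E S' p X → ¬ S' ⊂ S

/-- A minimum support network: one with the fewest edges among all support networks. -/
def IsMinimumSupportNet (E S : Finset (V × V)) (p : ℕ) (X : Finset V) : Prop :=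
  IsSupportNet E S p X ∧ ∀ S', IsSupportNet E S' p X → S.card ≤ S'.card

/-- `S ⊆ Z` is A-admissible (degrees taken in the ambient network `E`):
(C1) `S` contains every edge `(u,v)` of `Z` with `outdeg u = 1` or `indeg v = 1`;
(C2) of any two distinct edges of `Z` sharing a tail or a head, `S` contains at least one. -/
def AAdmissible (E Z S : Finset (V × V)) : Prop :=
  S ⊆ Z ∧
  (∀ e ∈ Z, (outdeg E e.1 = 1 ∨ indeg E e.2 = 1) → e ∈ S) ∧
  (∀ e₁ ∈ Z, ∀ e₂ ∈ Z, e₁ ≠ e₂ → Shares e₁ e₂ → e₁ ∈ S ∨ e₂ ∈ S)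

/-- A B-admissible subset: an A-admissible subset none of whose proper subsets
is A-admissible. -/
def BAdmissible (E Z S : Finset (V × V)) : Prop :=
  AAdmissible E Z S ∧ ∀ S', S' ⊂ S → ¬ AAdmissible E Z S'

/-- A C-admissible subset: an A-admissible subset of minimum cardinality. -/
def CAdmissible (E Z S : Finset (V × V)) : Prop :=
  AAdmissible E Z S ∧ ∀ S', AAdmissible E Z S' → S.card ≤ S'.card

/-- One subdivision step: an edge `(u, v)` is replaced by `(u, w), (w, v)` for a fresh
vertex `w`. -/
def SubdivStep (T T' : Finset (V × V)) : Prop :=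
  ∃ u w v, (u, v) ∈ T ∧ w ∉ verts T ∧
    T' = insert (u, w) (insert (w, v) (T.erase (u, v)))

/-- `S` is a subdivision of `T` (zero or more subdivision steps). -/
def IsSubdivisionOf (S T : Finset (V × V)) : Prop :=
  Relation.ReflTransGen SubdivStep T S

/-- A rooted binary phylogenetic tree on `X`: a 1-rooted network on `X` in which every
non-root, non-leaf vertex has in-degree 1 and out-degree 2. -/
def IsBinaryPhyloTree (T : Finset (V × V)) (X : Finset V) : Prop :=
  IsPhyloNet T 1 X ∧
  ∀ v ∈ verts T, indeg T v ≠ 0 → v ∉ X → indeg T v = 1 ∧ outdeg T v = 2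

/-- `N = (V, E)` is tree-based: it has a support tree, i.e. a spanning subgraph that is a
subdivision of some rooted binary phylogenetic tree on `X`. -/
def IsTreeBased (E : Finset (V × V)) (X : Finset V) : Prop :=
  ∃ S T, S ⊆ E ∧ verts S = verts E ∧ IsBinaryPhyloTree T X ∧ IsSubdivisionOf S T

/-- The underlying undirected simple graph of the digraph with edge set `S`. -/
def usym (S : Finset (V × V)) : SimpleGraph V where
  Adj u v := u ≠ v ∧ ((u, v) ∈ S ∨ (v, u) ∈ S)
  symm := ⟨fun _ _ h => ⟨h.1.symm, h.2.symm⟩⟩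
  loopless := ⟨fun _ h => h.1 rfl⟩

/-- Two edges of `S` lie in a common block of the underlying undirected graph:
they are equal or lie on a common cycle. -/
def SameBlock (S : Finset (V × V)) (e f : V × V) : Prop :=
  e = f ∨ ∃ (a : V) (w : (usym S).Walk a a), w.IsCycle ∧
    s(e.1, e.2) ∈ w.edges ∧ s(f.1, f.2) ∈ w.edges

/-- The number of reticulations (in-degree-2 vertices) contained in the block of the
edge `e` of `S`. -/
noncomputable def blockReticCount (S : Finset (V × V)) (e : V × V) : ℕ :=
  Set.ncard {v : V | indeg S v = 2 ∧ ∃ f ∈ S, SameBlock S e f ∧ (f.1 = v ∨ f.2 = v)}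

/-- The level of the network with edge set `S`: the maximum number of reticulations
contained in a block. -/
noncomputable def level (S : Finset (V × V)) : ℕ :=
  S.sup (blockReticCount S)


set_option linter.unusedSectionVars false

lemma gen_count {d : ℕ} (E : Finset (V × V)) (Z : Fin d → Finset (V × V))
    (hdisj : ∀ i j, i ≠ j → Disjoint (Z i) (Z j))
    (hcover : Finset.univ.biUnion Z = E)
    (Q : Finset (V × V) → Prop) (Qi : Fin d → Finset (V × V) → Prop)
    (hQsub : ∀ S, Q S → S ⊆ E)
    (hQisub : ∀ i T, Qi i T → T ⊆ Z i)
    (hiff : ∀ S, S ⊆ E → (Q S ↔ ∀ i, Qi i (S ∩ Z i))) :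
    Set.ncard {S | Q S} = ∏ i, Set.ncard {T | Qi i T} := by
  classical
  have hZE : ∀ i, Z i ⊆ E := fun i => hcover ▸ Finset.subset_biUnion_of_mem Z (Finset.mem_univ i)
  have hrec : ∀ S, S ⊆ E → Finset.univ.biUnion (fun i => S ∩ Z i) = S := by
    intro S hS
    ext e
    simp only [Finset.mem_biUnion, Finset.mem_univ, true_and, Finset.mem_inter]
    constructor
    · rintro ⟨i, he, _⟩; exact he
    · intro he
      have : e ∈ Finset.univ.biUnion Z := hcover ▸ hS he
      simp only [Finset.mem_biUnion, Finset.mem_univ, true_and] at this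
      obtain ⟨i, hi⟩ := this
      exact ⟨i, he, hi⟩
  have hint : ∀ (t : Fin d → Finset (V × V)), (∀ i, t i ⊆ Z i) →
      ∀ i, (Finset.univ.biUnion t) ∩ Z i = t i := by
    intro t ht i
    ext e
    simp only [Finset.mem_inter, Finset.mem_biUnion, Finset.mem_univ, true_and]
    constructor
    · rintro ⟨⟨j, hj⟩, hi⟩
      rcases eq_or_ne j i with rfl | hne
      · exact hj
      · exact absurd hi (Finset.disjoint_left.1 (hdisj j i hne) (ht j hj))
    · intro he
      exact ⟨⟨i, he⟩, ht i he⟩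
  have h1 : {S | Q S} = ↑(E.powerset.filter Q) := by
    ext S
    simp only [Set.mem_setOf_eq, Finset.coe_filter, Finset.mem_powerset, Set.mem_setOf_eq]
    exact ⟨fun h => ⟨hQsub S h, h⟩, fun h => h.2⟩
  have h2 : ∀ i, {T | Qi i T} = ↑((Z i).powerset.filter (Qi i)) := by
    intro i
    ext T
    simp only [Set.mem_setOf_eq, Finset.coe_filter, Finset.mem_powerset, Set.mem_setOf_eq]
    exact ⟨fun h => ⟨hQisub i T h, h⟩, fun h => h.2⟩
  rw [h1, Set.ncard_coe_finset]
  have hrhs : ∏ i, Set.ncard {T | Qi i T} =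
      (Fintype.piFinset (fun i => (Z i).powerset.filter (Qi i))).card := by
    rw [Fintype.card_piFinset]
    exact Finset.prod_congr rfl fun i _ => by rw [h2 i, Set.ncard_coe_finset]
  rw [hrhs]
  apply Finset.card_bij (fun S _ => fun i => S ∩ Z i)
  · intro S hS
    simp only [Finset.mem_filter, Finset.mem_powerset] at hS
    rw [Fintype.mem_piFinset]
    intro i
    simp only [Finset.mem_filter, Finset.mem_powerset]
    exact ⟨Finset.inter_subset_right, ((hiff S hS.1).1 hS.2) i⟩
  · intro S1 h1' S2 h2' heq
    simp only [Finset.mem_filter, Finset.mem_powerset] at h1' h2'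
    have := congrArg (Finset.univ.biUnion) heq
    rwa [hrec S1 h1'.1, hrec S2 h2'.1] at this
  · intro t ht
    rw [Fintype.mem_piFinset] at ht
    have htsub : ∀ i, t i ⊆ Z i := by
      intro i
      have := ht i
      simp only [Finset.mem_filter, Finset.mem_powerset] at this
      exact this.1
    refine ⟨Finset.univ.biUnion t, ?_, ?_⟩
    · simp only [Finset.mem_filter, Finset.mem_powerset]
      have hsub : Finset.univ.biUnion t ⊆ E := by
        intro e he
        simp only [Finset.mem_biUnion, Finset.mem_univ, true_and] at he
        obtain ⟨i, hi⟩ := he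
        exact hZE i (htsub i hi)
      refine ⟨hsub, (hiff _ hsub).2 ?_⟩
      intro i
      rw [hint t htsub i]
      have := ht i
      simp only [Finset.mem_filter, Finset.mem_powerset] at this
      exact this.2
    · funext i
      exact hint t htsub i

variable {V : Type} [DecidableEq V] [Fintype V]

lemma indeg_pos_iff (E : Finset (V × V)) (v : V) : 0 < indeg E v ↔ ∃ u, (u, v) ∈ E := by
  unfold indeg
  rw [Finset.card_pos, Finset.filter_nonempty_iff]
  constructor
  · rintro ⟨⟨a, b⟩, hab, h⟩; subst h; exact ⟨a, hab⟩
  · rintro ⟨u, hu⟩; exact ⟨(u, v), hu, rfl⟩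

lemma outdeg_pos_iff (E : Finset (V × V)) (v : V) : 0 < outdeg E v ↔ ∃ w, (v, w) ∈ E := by
  unfold outdeg
  rw [Finset.card_pos, Finset.filter_nonempty_iff]
  constructor
  · rintro ⟨⟨a, b⟩, hab, h⟩; subst h; exact ⟨b, hab⟩
  · rintro ⟨w, hw⟩; exact ⟨(v, w), hw, rfl⟩

lemma mem_verts_iff (E : Finset (V × V)) (v : V) :
    v ∈ verts E ↔ 0 < outdeg E v ∨ 0 < indeg E v := by
  rw [outdeg_pos_iff, indeg_pos_iff]
  unfold verts
  simp only [Finset.mem_union, Finset.mem_image]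
  constructor
  · rintro (⟨⟨a, b⟩, hab, h⟩ | ⟨⟨a, b⟩, hab, h⟩)
    · subst h; exact Or.inl ⟨b, hab⟩
    · subst h; exact Or.inr ⟨a, hab⟩
  · rintro (⟨w, hw⟩ | ⟨u, hu⟩)
    · exact Or.inl ⟨(v, w), hw, rfl⟩
    · exact Or.inr ⟨(u, v), hu, rfl⟩

lemma mem_X_deg {E : Finset (V × V)} {p : ℕ} {X : Finset V} (hN : IsPhyloNet E p X)
    {v : V} (hv : v ∈ X) : indeg E v = 1 ∧ outdeg E v = 0 := by
  rw [← hN.leaves_eq] at hv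
  exact (Finset.mem_filter.1 hv).2

lemma deg_le_two {E : Finset (V × V)} {p : ℕ} {X : Finset V} (hN : IsPhyloNet E p X)
    (v : V) : indeg E v ≤ 2 ∧ outdeg E v ≤ 2 := by
  by_cases hv : v ∈ verts E
  · by_cases hX : v ∈ X
    · have := mem_X_deg hN hX; omega
    · by_cases h0 : indeg E v = 0
      · have := hN.root_outdeg v hv h0; omega
      · have := hN.internal_deg v hv h0 hX; omega
  · rw [mem_verts_iff] at hv
    omega

lemma indeg_mono {E S : Finset (V × V)} (hS : S ⊆ E) (v : V) : indeg S v ≤ indeg E v :=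
  Finset.card_le_card (Finset.filter_subset_filter _ hS)

lemma outdeg_mono {E S : Finset (V × V)} (hS : S ⊆ E) (v : V) : outdeg S v ≤ outdeg E v :=
  Finset.card_le_card (Finset.filter_subset_filter _ hS)

lemma support_iff {E : Finset (V × V)} {p : ℕ} {X : Finset V} (hN : IsPhyloNet E p X)
    {S : Finset (V × V)} (hS : S ⊆ E) :
    IsSupportNet E S p X ↔
      ∀ v, (1 ≤ indeg E v → 1 ≤ indeg S v) ∧ (1 ≤ outdeg E v → 1 ≤ outdeg S v) := by
  constructor
  · rintro ⟨-, hVE, hP⟩ v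
    constructor
    · intro h1
      by_contra h0
      have h0' : indeg S v = 0 := by omega
      have hvE : v ∈ verts E := (mem_verts_iff E v).2 (Or.inr (by omega))
      have hRE : ((verts E).filter fun w => indeg E w = 0) ⊆
          ((verts S).filter fun w => indeg S w = 0) := by
        intro x hx
        rw [Finset.mem_filter] at hx ⊢
        have := indeg_mono hS x
        exact ⟨hVE ▸ hx.1, by omega⟩
      have heq : ((verts E).filter fun w => indeg E w = 0) =
          ((verts S).filter fun w => indeg S w = 0) :=
        Finset.eq_of_subset_of_card_le hRE (by rw [hP.roots_card, hN.roots_card])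
      have hv : v ∈ ((verts S).filter fun w => indeg S w = 0) :=
        Finset.mem_filter.2 ⟨hVE ▸ hvE, h0'⟩
      rw [← heq, Finset.mem_filter] at hv
      omega
    · intro h1
      by_contra h0
      have h0' : outdeg S v = 0 := by omega
      have hvE : v ∈ verts E := (mem_verts_iff E v).2 (Or.inl (by omega))
      have hvS : v ∈ verts S := hVE ▸ hvE
      have hX : v ∉ X := fun hvX => by have := mem_X_deg hN hvX; omega
      by_cases hi : indeg S v = 0
      · have := hP.root_outdeg v hvS hi; omega
      · have := (hP.internal_deg v hvS hi hX).2; omega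
  · intro hdeg
    have hind0 : ∀ v, indeg S v = 0 ↔ indeg E v = 0 := fun v => by
      have := indeg_mono hS v; have := (hdeg v).1; omega
    have hout0 : ∀ v, outdeg S v = 0 ↔ outdeg E v = 0 := fun v => by
      have := outdeg_mono hS v; have := (hdeg v).2; omega
    have hVE : verts S = verts E := by
      ext v
      rw [mem_verts_iff, mem_verts_iff]
      have := hind0 v; have := hout0 v
      omega
    refine ⟨hS, hVE, ?_, ?_, ?_, ?_, ?_⟩
    · intro v hv
      exact hN.acyclic v (Relation.TransGen.mono (p := fun a b => (a, b) ∈ E) (by intro a b hab; exact hS hab) v v hv)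
    · rw [hVE, Finset.filter_congr (fun v _ => by rw [hind0 v]), hN.roots_card]
    · intro v hv hi
      rw [hVE] at hv
      have hi' : indeg E v = 0 := (hind0 v).1 hi
      have := hN.root_outdeg v hv hi'
      have := outdeg_mono hS v
      have := (hdeg v).2
      omega
    · rw [hVE]
      ext v
      rw [Finset.mem_filter]
      constructor
      · rintro ⟨hv, h1, h2⟩
        have h2' : outdeg E v = 0 := (hout0 v).1 h2
        have h1' : indeg E v ≠ 0 := fun h => by rw [← hind0 v] at h; omega
        by_contra hvX
        have := (hN.internal_deg v hv h1' hvX).2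
        omega
      · intro hvX
        have hd := mem_X_deg hN hvX
        have hv : v ∈ verts E := by
          rw [← hN.leaves_eq] at hvX
          exact (Finset.mem_filter.1 hvX).1
        have := indeg_mono hS v
        have := outdeg_mono hS v
        have := (hdeg v).1
        refine ⟨hv, by omega, by omega⟩
    · intro v hv hi hvX
      rw [hVE] at hv
      have hi' : indeg E v ≠ 0 := fun h => by rw [← hind0 v] at h; omega
      have h := hN.internal_deg v hv hi' hvX
      have := indeg_mono hS v
      have := outdeg_mono hS v
      have := (hdeg v).1
      have := (hdeg v).2
      omega

lemma Shares.symm' {e f : V × V} (h : Shares e f) : Shares f e := by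
  rcases h with h | h
  · exact Or.inl h.symm
  · exact Or.inr h.symm

lemma card_le_two_unique {α : Type*} [DecidableEq α] {s : Finset α} (h : s.card ≤ 2)
    {a b c : α} (ha : a ∈ s) (hb : b ∈ s) (hc : c ∈ s) (hba : b ≠ a) (hca : c ≠ a) :
    b = c := by
  by_contra hbc
  have : 2 < s.card := Finset.two_lt_card_iff.2 ⟨a, b, c, ha, hb, hc, hba.symm, hca.symm, hbc⟩
  omega

lemma shares_closed {E : Finset (V × V)} {p : ℕ} {X : Finset V} (hN : IsPhyloNet E p X)
    {Zi : Finset (V × V)} (hZ : IsMaximalZigzagTrail E Zi) {e₁ e₂ : V × V}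
    (h1 : e₁ ∈ Zi) (h2 : e₂ ∈ E) (hne : e₁ ≠ e₂) (hsh : Shares e₁ e₂) : e₂ ∈ Zi := by
  by_contra h2Z
  obtain ⟨⟨hZE, l, hnil, hnd, htf, hch⟩, hmax⟩ := hZ
  have he₁l : e₁ ∈ l := by rw [← List.mem_toFinset, htf]; exact h1
  have he₂l : e₂ ∉ l := by rw [← List.mem_toFinset, htf]; exact h2Z
  have hext : ∀ l' : List (V × V), l'.Nodup → l'.toFinset = insert e₂ Zi →
      l'.Chain' Shares → False := by
    intro l' hnd' htf' hch'
    have hne' : l' ≠ [] := by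
      intro h
      rw [h] at htf'
      simp at htf'
      exact (Finset.insert_ne_empty e₂ Zi) htf'.symm
    exact hmax (insert e₂ Zi) ⟨Finset.insert_subset h2 hZE, l', hne', hnd', htf', hch'⟩
      (Finset.ssubset_insert h2Z)
  obtain ⟨s, t, rfl⟩ := List.append_of_mem he₁l
  rcases List.eq_nil_or_concat s with rfl | ⟨s', n₁, rfl⟩
  · -- e₁ is the head: prepend e₂
    refine hext (e₂ :: e₁ :: t) ?_ ?_ ?_
    · exact List.nodup_cons.2 ⟨by simpa using he₂l, by simpa using hnd⟩
    · rw [List.toFinset_cons, ← htf]; simp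
    · exact List.isChain_cons_cons.2 ⟨hsh.symm', by exact hch⟩
  · simp only [List.concat_eq_append] at hnd htf hch he₁l he₂l
    rcases t with _ | ⟨n₂, t'⟩
    · -- e₁ is the last: append e₂
      refine hext ((s' ++ [n₁] ++ [e₁]) ++ [e₂]) ?_ ?_ ?_
      · refine List.Nodup.append hnd (List.nodup_singleton e₂) ?_
        intro x hx hx2
        rw [List.mem_singleton] at hx2
        subst hx2
        exact he₂l hx
      · rw [List.toFinset_append, htf]
        ext x; simp only [Finset.mem_union, List.mem_toFinset, List.mem_singleton, Finset.mem_insert]; tauto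
      · refine List.isChain_append.2 ⟨hch, List.isChain_singleton e₂, ?_⟩
        intro x hx y hy
        simp only [List.head?_cons, Option.mem_def, Option.some.injEq] at hy
        have hx' : x = e₁ := by
          rw [List.getLast?_concat] at hx
          simpa using hx.symm
        subst hx'; subst hy
        exact hsh
    · -- e₁ is interior with neighbors n₁ and n₂ : degree contradiction
      have hch' : List.IsChain Shares (s' ++ [n₁] ++ e₁ :: n₂ :: t') := hch
      rw [List.isChain_append] at hch'
      obtain ⟨hchs, hcht, hrel⟩ := hch'
      have hn₁e₁ : Shares n₁ e₁ := by
        refine hrel n₁ ?_ e₁ ?_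
        · rw [List.getLast?_concat]; rfl
        · rfl
      have he₁n₂ : Shares e₁ n₂ := (List.isChain_cons_cons.1 hcht).1
      have hdisj' : (s' ++ [n₁]).Disjoint (e₁ :: n₂ :: t') :=
        List.disjoint_of_nodup_append hnd
      have hndr : (e₁ :: n₂ :: t').Nodup := hnd.of_append_right
      have hn₁l : n₁ ∈ s' ++ [n₁] ++ e₁ :: n₂ :: t' := by simp
      have hn₂l : n₂ ∈ s' ++ [n₁] ++ e₁ :: n₂ :: t' := by simp
      have hn₁e : n₁ ∈ E := hZE (by rw [← htf]; exact List.mem_toFinset.2 hn₁l)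
      have hn₂e : n₂ ∈ E := hZE (by rw [← htf]; exact List.mem_toFinset.2 hn₂l)
      have hn₁ne : n₁ ≠ e₁ := by
        intro h
        exact hdisj' (show n₁ ∈ s' ++ [n₁] by simp)
          (show n₁ ∈ e₁ :: n₂ :: t' by rw [h]; simp)
      have hn₂ne : n₂ ≠ e₁ := by
        intro h
        have := List.nodup_cons.1 hndr
        exact this.1 (by rw [← h]; simp)
      have hn₁n₂ : n₁ ≠ n₂ := by
        intro h
        exact hdisj' (show n₁ ∈ s' ++ [n₁] by simp)
          (show n₁ ∈ e₁ :: n₂ :: t' by rw [h]; simp)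
      have hn₁e₂ : n₁ ≠ e₂ := fun h => he₂l (h ▸ hn₁l)
      have hn₂e₂ : n₂ ≠ e₂ := fun h => he₂l (h ▸ hn₂l)
      have uT : ∀ f g : V × V, f ∈ E → g ∈ E → f.1 = e₁.1 → g.1 = e₁.1 →
          f ≠ e₁ → g ≠ e₁ → f = g := by
        intro f g hf hg hf1 hg1 hfne hgne
        have hcard : (E.filter fun e => e.1 = e₁.1).card ≤ 2 := (deg_le_two hN e₁.1).2
        exact card_le_two_unique hcard (Finset.mem_filter.2 ⟨hZE h1, rfl⟩)
          (Finset.mem_filter.2 ⟨hf, hf1⟩) (Finset.mem_filter.2 ⟨hg, hg1⟩) hfne hgne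
      have uH : ∀ f g : V × V, f ∈ E → g ∈ E → f.2 = e₁.2 → g.2 = e₁.2 →
          f ≠ e₁ → g ≠ e₁ → f = g := by
        intro f g hf hg hf1 hg1 hfne hgne
        have hcard : (E.filter fun e => e.2 = e₁.2).card ≤ 2 := (deg_le_two hN e₁.2).1
        exact card_le_two_unique hcard (Finset.mem_filter.2 ⟨hZE h1, rfl⟩)
          (Finset.mem_filter.2 ⟨hf, hf1⟩) (Finset.mem_filter.2 ⟨hg, hg1⟩) hfne hgne
      have s1 : n₁.1 = e₁.1 ∨ n₁.2 = e₁.2 := hn₁e₁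
      have s2 : n₂.1 = e₁.1 ∨ n₂.2 = e₁.2 := he₁n₂.symm'
      have s3 : e₂.1 = e₁.1 ∨ e₂.2 = e₁.2 := hsh.symm'
      rcases s1 with a1 | a1 <;> rcases s2 with a2 | a2 <;> rcases s3 with a3 | a3
      · exact hn₁n₂ (uT n₁ n₂ hn₁e hn₂e a1 a2 hn₁ne hn₂ne)
      · exact hn₁n₂ (uT n₁ n₂ hn₁e hn₂e a1 a2 hn₁ne hn₂ne)
      · exact hn₁e₂ (uT n₁ e₂ hn₁e h2 a1 a3 hn₁ne hne.symm)
      · exact hn₂e₂ (uH n₂ e₂ hn₂e h2 a2 a3 hn₂ne hne.symm)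
      · exact hn₂e₂ (uT n₂ e₂ hn₂e h2 a2 a3 hn₂ne hne.symm)
      · exact hn₁e₂ (uH n₁ e₂ hn₁e h2 a1 a3 hn₁ne hne.symm)
      · exact hn₁n₂ (uH n₁ n₂ hn₁e hn₂e a1 a2 hn₁ne hn₂ne)
      · exact hn₁n₂ (uH n₁ n₂ hn₁e hn₂e a1 a2 hn₁ne hn₂ne)

lemma mem_pair_of_card_le_two {α : Type*} [DecidableEq α] {s : Finset α} (h : s.card ≤ 2)
    {a b : α} (ha : a ∈ s) (hb : b ∈ s) (hab : a ≠ b) {c : α} (hc : c ∈ s) :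
    c = a ∨ c = b := by
  by_contra hcon
  push_neg at hcon
  have : 2 < s.card := Finset.two_lt_card_iff.2 ⟨a, b, c, ha, hb, hc, hab, hcon.1.symm, hcon.2.symm⟩
  omega

lemma deg_iff_adm {E : Finset (V × V)} {p : ℕ} {X : Finset V} (hN : IsPhyloNet E p X)
    {d : ℕ} {Z : Fin d → Finset (V × V)} (hmax : ∀ i, IsMaximalZigzagTrail E (Z i))
    (hcover : Finset.univ.biUnion Z = E) {S : Finset (V × V)} (hS : S ⊆ E) :
    (∀ v, (1 ≤ indeg E v → 1 ≤ indeg S v) ∧ (1 ≤ outdeg E v → 1 ≤ outdeg S v)) ↔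
      ∀ i, AAdmissible E (Z i) (S ∩ Z i) := by
  have hZE : ∀ i, Z i ⊆ E := fun i => (hmax i).1.1
  constructor
  · intro hdeg i
    refine ⟨Finset.inter_subset_right, ?_, ?_⟩
    · intro e he hcond
      have heE : e ∈ E := hZE i he
      rcases hcond with h1 | h1
      · have hpos : 1 ≤ outdeg S e.1 := (hdeg e.1).2 (by omega)
        obtain ⟨w, hw⟩ := (outdeg_pos_iff S e.1).1 (by omega)
        have : (e.1, w) = e := by
          refine Finset.card_le_one.1 (le_of_eq h1) _ ?_ _ ?_
          · exact Finset.mem_filter.2 ⟨hS hw, rfl⟩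
          · exact Finset.mem_filter.2 ⟨heE, rfl⟩
        exact Finset.mem_inter.2 ⟨this ▸ hw, he⟩
      · have hpos : 1 ≤ indeg S e.2 := (hdeg e.2).1 (by omega)
        obtain ⟨u, hu⟩ := (indeg_pos_iff S e.2).1 (by omega)
        have : (u, e.2) = e := by
          refine Finset.card_le_one.1 (le_of_eq h1) _ ?_ _ ?_
          · exact Finset.mem_filter.2 ⟨hS hu, rfl⟩
          · exact Finset.mem_filter.2 ⟨heE, rfl⟩
        exact Finset.mem_inter.2 ⟨this ▸ hu, he⟩
    · intro e₁ h1 e₂ h2 hne hsh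
      have h1E : e₁ ∈ E := hZE i h1
      have h2E : e₂ ∈ E := hZE i h2
      rcases hsh with ht | hh
      · -- share tail
        have hm1 : e₁ ∈ E.filter fun e => e.1 = e₁.1 := Finset.mem_filter.2 ⟨h1E, rfl⟩
        have hm2 : e₂ ∈ E.filter fun e => e.1 = e₁.1 := Finset.mem_filter.2 ⟨h2E, ht.symm⟩
        have hcard : (E.filter fun e => e.1 = e₁.1).card ≤ 2 := (deg_le_two hN e₁.1).2
        have hout : 1 ≤ outdeg E e₁.1 :=
          Finset.card_pos.2 ⟨e₁, hm1⟩
        have hpos : 1 ≤ outdeg S e₁.1 := (hdeg e₁.1).2 hout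
        obtain ⟨w, hw⟩ := (outdeg_pos_iff S e₁.1).1 (by omega)
        have hmem : (e₁.1, w) ∈ E.filter fun e => e.1 = e₁.1 :=
          Finset.mem_filter.2 ⟨hS hw, rfl⟩
        rcases mem_pair_of_card_le_two hcard hm1 hm2 hne hmem with h | h
        · exact Or.inl (Finset.mem_inter.2 ⟨h ▸ hw, h1⟩)
        · exact Or.inr (Finset.mem_inter.2 ⟨h ▸ hw, h2⟩)
      · -- share head
        have hm1 : e₁ ∈ E.filter fun e => e.2 = e₁.2 := Finset.mem_filter.2 ⟨h1E, rfl⟩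
        have hm2 : e₂ ∈ E.filter fun e => e.2 = e₁.2 := Finset.mem_filter.2 ⟨h2E, hh.symm⟩
        have hcard : (E.filter fun e => e.2 = e₁.2).card ≤ 2 := (deg_le_two hN e₁.2).1
        have hin : 1 ≤ indeg E e₁.2 := Finset.card_pos.2 ⟨e₁, hm1⟩
        have hpos : 1 ≤ indeg S e₁.2 := (hdeg e₁.2).1 hin
        obtain ⟨u, hu⟩ := (indeg_pos_iff S e₁.2).1 (by omega)
        have hmem : (u, e₁.2) ∈ E.filter fun e => e.2 = e₁.2 :=
          Finset.mem_filter.2 ⟨hS hu, rfl⟩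
        rcases mem_pair_of_card_le_two hcard hm1 hm2 hne hmem with h | h
        · exact Or.inl (Finset.mem_inter.2 ⟨h ▸ hu, h1⟩)
        · exact Or.inr (Finset.mem_inter.2 ⟨h ▸ hu, h2⟩)
  · intro hadm v
    constructor
    · intro h1
      obtain ⟨u, hu⟩ := (indeg_pos_iff E v).1 (by omega)
      have hiZ : ∃ i, (u, v) ∈ Z i := by
        have : (u, v) ∈ Finset.univ.biUnion Z := hcover ▸ hu
        simpa using this
      obtain ⟨i, hi⟩ := hiZ
      have hle : indeg E v ≤ 2 := (deg_le_two hN v).1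
      rcases (by omega : indeg E v = 1 ∨ indeg E v = 2) with h2 | h2
      · have : (u, v) ∈ S ∩ Z i := (hadm i).2.1 (u, v) hi (Or.inr h2)
        exact (indeg_pos_iff S v).2 ⟨u, (Finset.mem_inter.1 this).1⟩
      · obtain ⟨e', he', hne'⟩ := Finset.exists_mem_ne
          (s := E.filter fun e => e.2 = v) (by show 1 < indeg E v; omega) (u, v)
        have he'E : e' ∈ E := (Finset.mem_filter.1 he').1
        have he'2 : e'.2 = v := (Finset.mem_filter.1 he').2
        have hsh : Shares (u, v) e' := Or.inr he'2.symm
        have he'Z : e' ∈ Z i := shares_closed hN (hmax i) hi he'E (Ne.symm hne') hsh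
        rcases (hadm i).2.2 (u, v) hi e' he'Z (Ne.symm hne') hsh with h | h
        · exact (indeg_pos_iff S v).2 ⟨u, (Finset.mem_inter.1 h).1⟩
        · refine (indeg_pos_iff S v).2 ⟨e'.1, ?_⟩
          have := (Finset.mem_inter.1 h).1
          rwa [show (e'.1, v) = e' from Prod.ext rfl he'2.symm]
    · intro h1
      obtain ⟨w, hw⟩ := (outdeg_pos_iff E v).1 (by omega)
      have hiZ : ∃ i, (v, w) ∈ Z i := by
        have : (v, w) ∈ Finset.univ.biUnion Z := hcover ▸ hw
        simpa using this
      obtain ⟨i, hi⟩ := hiZ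
      have hle : outdeg E v ≤ 2 := (deg_le_two hN v).2
      rcases (by omega : outdeg E v = 1 ∨ outdeg E v = 2) with h2 | h2
      · have : (v, w) ∈ S ∩ Z i := (hadm i).2.1 (v, w) hi (Or.inl h2)
        exact (outdeg_pos_iff S v).2 ⟨w, (Finset.mem_inter.1 this).1⟩
      · obtain ⟨e', he', hne'⟩ := Finset.exists_mem_ne
          (s := E.filter fun e => e.1 = v) (by show 1 < outdeg E v; omega) (v, w)
        have he'E : e' ∈ E := (Finset.mem_filter.1 he').1
        have he'1 : e'.1 = v := (Finset.mem_filter.1 he').2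
        have hsh : Shares (v, w) e' := Or.inl he'1.symm
        have he'Z : e' ∈ Z i := shares_closed hN (hmax i) hi he'E (Ne.symm hne') hsh
        rcases (hadm i).2.2 (v, w) hi e' he'Z (Ne.symm hne') hsh with h | h
        · exact (outdeg_pos_iff S v).2 ⟨w, (Finset.mem_inter.1 h).1⟩
        · refine (outdeg_pos_iff S v).2 ⟨e'.2, ?_⟩
          have := (Finset.mem_inter.1 h).1
          rwa [show (v, e'.2) = e' from Prod.ext he'1.symm rfl]

section Decomp

variable {E : Finset (V × V)} {d : ℕ} {Z : Fin d → Finset (V × V)}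

lemma biUnion_inter_eq (hcover : Finset.univ.biUnion Z = E) {S : Finset (V × V)}
    (hS : S ⊆ E) : Finset.univ.biUnion (fun i => S ∩ Z i) = S := by
  ext e
  simp only [Finset.mem_biUnion, Finset.mem_univ, true_and, Finset.mem_inter]
  constructor
  · rintro ⟨i, he, _⟩; exact he
  · intro he
    have : e ∈ Finset.univ.biUnion Z := hcover ▸ hS he
    simp only [Finset.mem_biUnion, Finset.mem_univ, true_and] at this
    obtain ⟨i, hi⟩ := this
    exact ⟨i, he, hi⟩

lemma card_eq_sum_inter (hdisj : ∀ i j, i ≠ j → Disjoint (Z i) (Z j))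
    (hcover : Finset.univ.biUnion Z = E) {S : Finset (V × V)} (hS : S ⊆ E) :
    S.card = ∑ i, (S ∩ Z i).card := by
  conv_lhs => rw [← biUnion_inter_eq hcover hS]
  exact Finset.card_biUnion fun i _ j _ hij =>
    (hdisj i j hij).mono Finset.inter_subset_right Finset.inter_subset_right

lemma patch_inter_self (hdisj : ∀ i j, i ≠ j → Disjoint (Z i) (Z j))
    {S T : Finset (V × V)} {i : Fin d} (hT : T ⊆ Z i) :
    ((S \ Z i) ∪ T) ∩ Z i = T := by
  ext e
  simp only [Finset.mem_inter, Finset.mem_union, Finset.mem_sdiff]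
  constructor
  · rintro ⟨⟨he, hni⟩ | he, hi⟩
    · exact absurd hi hni
    · exact he
  · intro he
    exact ⟨Or.inr he, hT he⟩

lemma patch_inter_other (hdisj : ∀ i j, i ≠ j → Disjoint (Z i) (Z j))
    {S T : Finset (V × V)} {i j : Fin d} (hT : T ⊆ Z i) (hij : j ≠ i) :
    ((S \ Z i) ∪ T) ∩ Z j = S ∩ Z j := by
  ext e
  simp only [Finset.mem_inter, Finset.mem_union, Finset.mem_sdiff]
  constructor
  · rintro ⟨⟨he, _⟩ | he, hj⟩
    · exact ⟨he, hj⟩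
    · exact absurd hj (Finset.disjoint_left.1 (hdisj i j (Ne.symm hij)) (hT he))
  · intro ⟨he, hj⟩
    refine ⟨Or.inl ⟨he, ?_⟩, hj⟩
    exact fun hi => Finset.disjoint_left.1 (hdisj i j (Ne.symm hij)) hi hj

end Decomp

section Main

variable {E : Finset (V × V)} {p : ℕ} {X : Finset V} {d : ℕ} {Z : Fin d → Finset (V × V)}

lemma supp_iff_adm (hN : IsPhyloNet E p X) (hmax : ∀ i, IsMaximalZigzagTrail E (Z i))
    (hcover : Finset.univ.biUnion Z = E) {S : Finset (V × V)} (hS : S ⊆ E) :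
    IsSupportNet E S p X ↔ ∀ i, AAdmissible E (Z i) (S ∩ Z i) :=
  (support_iff hN hS).trans (deg_iff_adm hN hmax hcover hS)

lemma minimal_iff_adm (hN : IsPhyloNet E p X) (hmax : ∀ i, IsMaximalZigzagTrail E (Z i))
    (hdisj : ∀ i j, i ≠ j → Disjoint (Z i) (Z j))
    (hcover : Finset.univ.biUnion Z = E) {S : Finset (V × V)} (hS : S ⊆ E) :
    IsMinimalSupportNet E S p X ↔ ∀ i, BAdmissible E (Z i) (S ∩ Z i) := by
  have hZE : ∀ i, Z i ⊆ E := fun i => (hmax i).1.1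
  constructor
  · rintro ⟨hsn, hmin⟩ i
    refine ⟨(supp_iff_adm hN hmax hcover hS).1 hsn i, ?_⟩
    intro T hT hTadm
    have hTZ : T ⊆ Z i := hTadm.1
    set S' := (S \ Z i) ∪ T with hS'def
    have h1 : S' ∩ Z i = T := patch_inter_self hdisj hTZ
    have h2 : ∀ j, j ≠ i → S' ∩ Z j = S ∩ Z j := fun j hj => patch_inter_other hdisj hTZ hj
    have hS'E : S' ⊆ E :=
      Finset.union_subset (Finset.sdiff_subset.trans hS) ((hTZ.trans (hZE i)))
    have hS'sn : IsSupportNet E S' p X := by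
      rw [supp_iff_adm hN hmax hcover hS'E]
      intro j
      by_cases hj : j = i
      · subst hj; rw [h1]; exact hTadm
      · rw [h2 j hj]; exact (supp_iff_adm hN hmax hcover hS).1 hsn j
    have hsub : S' ⊆ S := by
      refine Finset.union_subset Finset.sdiff_subset ?_
      exact (hT.subset.trans Finset.inter_subset_left)
    obtain ⟨e, heS, heT⟩ := Finset.exists_of_ssubset hT
    have heS' : e ∉ S' := by
      simp only [hS'def, Finset.mem_union, Finset.mem_sdiff]
      push_neg
      exact ⟨fun _ => (Finset.mem_inter.1 heS).2, heT⟩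
    exact hmin S' hS'sn (Finset.ssubset_iff_of_subset hsub |>.2
      ⟨e, (Finset.mem_inter.1 heS).1, heS'⟩)
  · intro hB
    refine ⟨(supp_iff_adm hN hmax hcover hS).2 fun i => (hB i).1, ?_⟩
    intro S' hS' hss
    have hS'E : S' ⊆ E := hS'.1
    have hadm' := (supp_iff_adm hN hmax hcover hS'E).1 hS'
    have heq : ∀ i, S' ∩ Z i = S ∩ Z i := by
      intro i
      by_contra hne
      exact (hB i).2 (S' ∩ Z i)
        (ssubset_of_subset_of_ne (Finset.inter_subset_inter_right hss.subset) hne)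
        (hadm' i)
    have : S' = S := by
      rw [← biUnion_inter_eq hcover hS'E, ← biUnion_inter_eq hcover hS]
      exact Finset.biUnion_congr rfl fun i _ => heq i
    exact hss.ne this

lemma minimum_iff_adm (hN : IsPhyloNet E p X) (hmax : ∀ i, IsMaximalZigzagTrail E (Z i))
    (hdisj : ∀ i j, i ≠ j → Disjoint (Z i) (Z j))
    (hcover : Finset.univ.biUnion Z = E) {S : Finset (V × V)} (hS : S ⊆ E) :
    IsMinimumSupportNet E S p X ↔ ∀ i, CAdmissible E (Z i) (S ∩ Z i) := by
  have hZE : ∀ i, Z i ⊆ E := fun i => (hmax i).1.1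
  constructor
  · rintro ⟨hsn, hmin⟩ i
    refine ⟨(supp_iff_adm hN hmax hcover hS).1 hsn i, ?_⟩
    intro T hTadm
    have hTZ : T ⊆ Z i := hTadm.1
    set S' := (S \ Z i) ∪ T with hS'def
    have h1 : S' ∩ Z i = T := patch_inter_self hdisj hTZ
    have h2 : ∀ j, j ≠ i → S' ∩ Z j = S ∩ Z j := fun j hj => patch_inter_other hdisj hTZ hj
    have hS'E : S' ⊆ E :=
      Finset.union_subset (Finset.sdiff_subset.trans hS) ((hTZ.trans (hZE i)))
    have hS'sn : IsSupportNet E S' p X := by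
      rw [supp_iff_adm hN hmax hcover hS'E]
      intro j
      by_cases hj : j = i
      · subst hj; rw [h1]; exact hTadm
      · rw [h2 j hj]; exact (supp_iff_adm hN hmax hcover hS).1 hsn j
    have hcard := hmin S' hS'sn
    rw [card_eq_sum_inter hdisj hcover hS, card_eq_sum_inter hdisj hcover hS'E] at hcard
    rw [← Finset.sum_erase_add _ _ (Finset.mem_univ i),
      ← Finset.sum_erase_add _ _ (Finset.mem_univ i)] at hcard
    have hpart : ∑ j ∈ Finset.univ.erase i, (S ∩ Z j).card =
        ∑ j ∈ Finset.univ.erase i, (S' ∩ Z j).card :=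
      Finset.sum_congr rfl fun j hj => by rw [h2 j (Finset.mem_erase.1 hj).1]
    rw [h1] at hcard
    omega
  · intro hC
    refine ⟨(supp_iff_adm hN hmax hcover hS).2 fun i => (hC i).1, ?_⟩
    intro S' hS'
    have hadm' := (supp_iff_adm hN hmax hcover hS'.1).1 hS'
    rw [card_eq_sum_inter hdisj hcover hS, card_eq_sum_inter hdisj hcover hS'.1]
    exact Finset.sum_le_sum fun i _ => (hC i).2 _ (hadm' i)

end Main

/-- `|A_N| = ∏ᵢ |S_A(Zᵢ)|`, `|B_N| = ∏ᵢ |S_B(Zᵢ)|`, and `|C_N| = ∏ᵢ |S_C(Zᵢ)|`. -/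
theorem stmt9 (p : ℕ) (hp : 1 ≤ p) (X : Finset V) (hX : X.Nonempty)
    (E : Finset (V × V)) (hN : IsPhyloNet E p X)
    (d : ℕ) (Z : Fin d → Finset (V × V))
    (hmax : ∀ i, IsMaximalZigzagTrail E (Z i))
    (hdisj : ∀ i j, i ≠ j → Disjoint (Z i) (Z j))
    (hcover : Finset.univ.biUnion Z = E) :
    Set.ncard {S | IsSupportNet E S p X} = ∏ i : Fin d, Set.ncard {S | AAdmissible E (Z i) S} ∧
    Set.ncard {S | IsMinimalSupportNet E S p X} = ∏ i : Fin d, Set.ncard {S | BAdmissible E (Z i) S} ∧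
    Set.ncard {S | IsMinimumSupportNet E S p X} = ∏ i : Fin d, Set.ncard {S | CAdmissible E (Z i) S} := by
  refine ⟨?_, ?_, ?_⟩
  · exact gen_count E Z hdisj hcover _ _ (fun S h => h.1) (fun i T h => h.1)
      (fun S hS => supp_iff_adm hN hmax hcover hS)
  · exact gen_count E Z hdisj hcover _ _ (fun S h => h.1.1) (fun i T h => h.1.1)
      (fun S hS => minimal_iff_adm hN hmax hdisj hcover hS)
  · exact gen_count E Z hdisj hcover _ _ (fun S h => h.1.1) (fun i T h => h.1.1)
      (fun S hS => minimum_iff_adm hN hmax hdisj hcover hS)
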